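/- The direct product ∏_{n ∈ ℕ} ℤ contains a free abelian subgroup of rank 2^ℵ₀. -/

import Mathlib

open Cardinal

theorem stmt_4 :
    ∃ f : FreeAbelianGroup ℝ →+ (ℕ → ℤ), Function.Injective f := by
  classical
  -- A Hamel basis of ℝ over ℚ, indexed by a set of cardinality continuum
  set B := Module.Basis.ofVectorSpace ℚ ℝ with hB
  obtain ⟨g⟩ : Nonempty (ℝ ≃ Module.Basis.ofVectorSpaceIndex ℚ ℝ) := by
    rw [← Cardinal.eq, Module.Basis.mk_eq_rank'' B, Real.rank_rat_real, Cardinal.mk_real]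
  set b : ℝ → ℝ := fun r => B (g r) with hb
  have hbli : LinearIndependent ℚ b := B.linearIndependent.comp g g.injective
  -- The embedding of basis vectors into integer sequences via binary approximations
  set v : ℝ → (ℕ → ℤ) := fun r n => ⌊(2 : ℝ) ^ n * b r⌋ with hv
  have hli : LinearIndependent ℤ v := by
    rw [linearIndependent_iff']
    intro s c h i hi
    -- first: the real linear combination of the b's vanishes
    have hS : ∑ j ∈ s, (c j : ℝ) * b j = 0 := by
      by_contra hS0
      set S := ∑ j ∈ s, (c j : ℝ) * b j with hSdef
      set C : ℝ := ∑ j ∈ s, |(c j : ℝ)| with hC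
      obtain ⟨n, hn⟩ := pow_unbounded_of_one_lt (C / |S|) (by norm_num : (1:ℝ) < 2)
      have habs : |S| > 0 := abs_pos.mpr hS0
      have hcoord : ∑ j ∈ s, (c j : ℝ) * (⌊(2:ℝ)^n * b j⌋ : ℝ) = 0 := by
        have := congrFun h n
        simp only [Finset.sum_apply, Pi.smul_apply, smul_eq_mul, Pi.zero_apply] at this
        have : ((∑ j ∈ s, c j * v j n : ℤ) : ℝ) = 0 := by exact_mod_cast this
        push_cast at this
        convert this using 2
      have hbound : (2:ℝ)^n * |S| ≤ C := by
        have : (2:ℝ)^n * S = ∑ j ∈ s, (c j : ℝ) * ((2:ℝ)^n * b j - (⌊(2:ℝ)^n * b j⌋ : ℝ)) := by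
          rw [hSdef, Finset.mul_sum]
          rw [show (∑ j ∈ s, (c j : ℝ) * ((2:ℝ)^n * b j - (⌊(2:ℝ)^n * b j⌋ : ℝ)))
              = ∑ j ∈ s, (c j : ℝ) * ((2:ℝ)^n * b j) - ∑ j ∈ s, (c j : ℝ) * (⌊(2:ℝ)^n * b j⌋ : ℝ) by
            rw [← Finset.sum_sub_distrib]; apply Finset.sum_congr rfl; intros; ring]
          rw [hcoord, sub_zero]
          apply Finset.sum_congr rfl; intros; ring
        calc (2:ℝ)^n * |S| = |(2:ℝ)^n * S| := by
              rw [abs_mul, abs_pow, abs_two]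
          _ = |∑ j ∈ s, (c j : ℝ) * ((2:ℝ)^n * b j - (⌊(2:ℝ)^n * b j⌋ : ℝ))| := by rw [this]
          _ ≤ ∑ j ∈ s, |(c j : ℝ) * ((2:ℝ)^n * b j - (⌊(2:ℝ)^n * b j⌋ : ℝ))| :=
              Finset.abs_sum_le_sum_abs _ _
          _ ≤ ∑ j ∈ s, |(c j : ℝ)| := by
              apply Finset.sum_le_sum
              intro j _
              rw [abs_mul]
              have h1 : |(2:ℝ)^n * b j - (⌊(2:ℝ)^n * b j⌋ : ℝ)| ≤ 1 := by
                rw [abs_of_nonneg (by exact sub_nonneg.mpr (Int.floor_le _))]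
                have := Int.sub_one_lt_floor ((2:ℝ)^n * b j)
                linarith
              calc |(c j : ℝ)| * |(2:ℝ)^n * b j - (⌊(2:ℝ)^n * b j⌋ : ℝ)|
                  ≤ |(c j : ℝ)| * 1 := by
                    exact mul_le_mul_of_nonneg_left h1 (abs_nonneg _)
                _ = |(c j : ℝ)| := mul_one _
      rw [div_lt_iff₀ habs] at hn
      nlinarith
    -- now use ℚ-linear independence
    have := linearIndependent_iff'.mp hbli s (fun j => (c j : ℚ)) ?_ i hi
    · simpa using this
    · have : ∑ j ∈ s, ((c j : ℚ)) • b j = ∑ j ∈ s, (c j : ℝ) * b j := by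
        apply Finset.sum_congr rfl; intro j _
        rw [Rat.smul_def]; push_cast; ring
      rw [this, hS]
  have hinj : Function.Injective (Finsupp.linearCombination ℤ v) := hli
  refine ⟨((Finsupp.linearCombination ℤ v).toAddMonoidHom.comp
      (FreeAbelianGroup.equivFinsupp ℝ).toAddMonoidHom), ?_⟩
  simp only [AddMonoidHom.coe_comp, LinearMap.toAddMonoidHom_coe, AddEquiv.coe_toAddMonoidHom]
  exact hinj.comp (FreeAbelianGroup.equivFinsupp ℝ).injective
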